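/- Let {uʲ(t)}ⱼ₌₁ᴶ solve the deterministic EKI u̇ʲ = −C(t)AᵀΓ⁻¹(Auʲ − y) where C(t) is the empirical covariance. Let eʲ(t) = uʲ(t) − m(t) be the deviations from the sample mean and V_e(t) = (1/(2J))∑ⱼ‖eʲ(t)‖². Then V̇_e(t) = −(1/J²) ∑_{i,j} ⟨eⁱ, eʲ⟩ ⟨Aeⁱ, Aeʲ⟩_Γ ≤ 0, i.e. the ensemble spread is nonincreasing. -/

import Mathlib

open Matrix Finset

section Helpers
variable {ι : Type*} {n p : ℕ}

lemma my_sum_mulVec (s : Finset ι) (M : ι → Matrix (Fin n) (Fin p) ℝ) (v : Fin p → ℝ) :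
    (∑ i ∈ s, M i) *ᵥ v = ∑ i ∈ s, (M i) *ᵥ v := by
  funext k
  simp only [mulVec, dotProduct, Matrix.sum_apply, Finset.sum_apply, Finset.sum_mul]
  rw [Finset.sum_comm]

lemma my_smul_mulVec (c : ℝ) (M : Matrix (Fin n) (Fin p) ℝ) (v : Fin p → ℝ) :
    (c • M) *ᵥ v = c • (M *ᵥ v) := by
  funext k
  simp [mulVec, dotProduct, Finset.mul_sum, mul_assoc]

lemma my_vecMulVec_mulVec (a : Fin n → ℝ) (b v : Fin p → ℝ) :
    vecMulVec a b *ᵥ v = (b ⬝ᵥ v) • a := by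
  funext k
  simp only [mulVec, dotProduct, vecMulVec_apply, Pi.smul_apply, smul_eq_mul,
    Finset.sum_mul]
  exact Finset.sum_congr rfl fun i _ => by ring

lemma my_mulVec_sum (s : Finset ι) (M : Matrix (Fin n) (Fin p) ℝ) (v : ι → Fin p → ℝ) :
    M *ᵥ (∑ i ∈ s, v i) = ∑ i ∈ s, M *ᵥ v i := by
  funext k
  simp only [mulVec, dotProduct, Finset.sum_apply, Finset.mul_sum]
  rw [Finset.sum_comm]

lemma my_dotProduct_sum (s : Finset ι) (x : Fin n → ℝ) (v : ι → Fin n → ℝ) :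
    x ⬝ᵥ (∑ i ∈ s, v i) = ∑ i ∈ s, x ⬝ᵥ v i := by
  simp only [dotProduct, Finset.sum_apply, Finset.mul_sum]
  rw [Finset.sum_comm]

lemma gram_sum_nonneg {J n m : ℕ} (e : Fin J → Fin n → ℝ) (f : Fin J → Fin m → ℝ) :
    0 ≤ ∑ i, ∑ j, (e i ⬝ᵥ e j) * (f i ⬝ᵥ f j) := by
  have key : ∑ i, ∑ j, (e i ⬝ᵥ e j) * (f i ⬝ᵥ f j)
      = ∑ q : Fin n × Fin m, (∑ i, e i q.1 * f i q.2) ^ 2 := by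
    have h1 : ∀ i j : Fin J, (e i ⬝ᵥ e j) * (f i ⬝ᵥ f j)
        = ∑ q : Fin n × Fin m, (e i q.1 * f i q.2) * (e j q.1 * f j q.2) := by
      intro i j
      rw [Fintype.sum_prod_type, dotProduct, dotProduct, Finset.sum_mul_sum]
      exact Finset.sum_congr rfl fun k _ => Finset.sum_congr rfl fun l _ => by ring
    calc ∑ i, ∑ j, (e i ⬝ᵥ e j) * (f i ⬝ᵥ f j)
        = ∑ i, ∑ j, ∑ q : Fin n × Fin m, (e i q.1 * f i q.2) * (e j q.1 * f j q.2) := by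
          simp_rw [h1]
      _ = ∑ i, ∑ q : Fin n × Fin m, ∑ j, (e i q.1 * f i q.2) * (e j q.1 * f j q.2) :=
          Finset.sum_congr rfl fun i _ => Finset.sum_comm
      _ = ∑ q : Fin n × Fin m, ∑ i, ∑ j, (e i q.1 * f i q.2) * (e j q.1 * f j q.2) :=
          Finset.sum_comm
      _ = ∑ q : Fin n × Fin m, (∑ i, e i q.1 * f i q.2) ^ 2 := by
          refine Finset.sum_congr rfl fun q _ => ?_
          rw [sq, Finset.sum_mul_sum]
  rw [key]
  exact Finset.sum_nonneg fun q _ => sq_nonneg _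

end Helpers

theorem ensemble_spread_decreasing {n m J : ℕ} (hJ : 0 < J)
    (A : Matrix (Fin m) (Fin n) ℝ)
    (Γ : Matrix (Fin m) (Fin m) ℝ) (hΓ : Γ.PosDef)
    (y : Fin m → ℝ)
    (u : ℝ → Fin J → Fin n → ℝ)
    (mean : ℝ → Fin n → ℝ) (hmean : ∀ t, mean t = (J : ℝ)⁻¹ • ∑ j, u t j)
    (e : ℝ → Fin J → Fin n → ℝ) (he : ∀ t j, e t j = u t j - mean t)
    (C : ℝ → Matrix (Fin n) (Fin n) ℝ)
    (hC : ∀ t, C t = (J : ℝ)⁻¹ • ∑ j, vecMulVec (e t j) (e t j))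
    (hu : ∀ t : ℝ, ∀ j : Fin J, ∀ i : Fin n,
      HasDerivAt (fun s => u s j i)
        (-((C t * Aᵀ * Γ⁻¹) *ᵥ (A *ᵥ u t j - y)) i) t)
    (Ve : ℝ → ℝ)
    (hVe : ∀ t, Ve t = (2 * (J : ℝ))⁻¹ * ∑ j, (e t j ⬝ᵥ e t j)) :
    ∀ t : ℝ,
      HasDerivAt Ve
        (-(J : ℝ)⁻¹ ^ 2 * ∑ i, ∑ j,
          (e t i ⬝ᵥ e t j) * ((A *ᵥ e t i) ⬝ᵥ (Γ⁻¹ *ᵥ (A *ᵥ e t j)))) t ∧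
      (-(J : ℝ)⁻¹ ^ 2 * ∑ i, ∑ j,
          (e t i ⬝ᵥ e t j) * ((A *ᵥ e t i) ⬝ᵥ (Γ⁻¹ *ᵥ (A *ᵥ e t j)))) ≤ 0 := by
  intro t
  have hJ' : (J : ℝ) ≠ 0 := Nat.cast_ne_zero.mpr hJ.ne'
  -- the vector form of the derivative of e
  have hvec : ∀ j : Fin J,
      (fun k => (-((C t * Aᵀ * Γ⁻¹) *ᵥ (A *ᵥ u t j - y)) k
        - (J : ℝ)⁻¹ * ∑ i, (-((C t * Aᵀ * Γ⁻¹) *ᵥ (A *ᵥ u t i - y)) k)))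
      = -(((C t * Aᵀ * Γ⁻¹) * A) *ᵥ e t j) := by
    intro j
    have h1 : ∀ i, (C t * Aᵀ * Γ⁻¹) *ᵥ (A *ᵥ u t i - y)
        = ((C t * Aᵀ * Γ⁻¹) * A) *ᵥ u t i - (C t * Aᵀ * Γ⁻¹) *ᵥ y := fun i => by
      rw [mulVec_sub, mulVec_mulVec]
    have h2 : ((C t * Aᵀ * Γ⁻¹) * A) *ᵥ e t j
        = ((C t * Aᵀ * Γ⁻¹) * A) *ᵥ u t j
          - (J : ℝ)⁻¹ • ∑ i, ((C t * Aᵀ * Γ⁻¹) * A) *ᵥ u t i := by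
      rw [he, hmean, mulVec_sub, mulVec_smul, my_mulVec_sum]
    funext k
    simp only [h1, h2, Pi.neg_apply, Pi.sub_apply, Pi.smul_apply, Finset.sum_apply,
      smul_eq_mul, Finset.sum_sub_distrib, Finset.sum_neg_distrib, Finset.sum_const,
      Finset.card_univ, Fintype.card_fin, nsmul_eq_mul, mul_sub, neg_sub]
    field_simp
    ring
  -- derivative of each component of e
  have hde : ∀ (j : Fin J) (k : Fin n),
      HasDerivAt (fun s => e s j k) ((-(((C t * Aᵀ * Γ⁻¹) * A) *ᵥ e t j)) k) t := by
    intro j k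
    have h2 : (fun s => e s j k) = fun s => u s j k - (J : ℝ)⁻¹ * ∑ i, u s i k := by
      funext s
      rw [he, hmean]
      simp [Finset.sum_apply]
    have hsum : HasDerivAt (fun s => ∑ i, u s i k)
        (∑ i, (-((C t * Aᵀ * Γ⁻¹) *ᵥ (A *ᵥ u t i - y)) k)) t :=
      HasDerivAt.fun_sum fun i _ => hu t i k
    have hd := (hu t j k).sub (hsum.const_mul ((J : ℝ)⁻¹))
    rw [h2]
    exact hd.congr_deriv (congrFun (hvec j) k)
  -- derivative of Ve
  have hVe' : Ve = fun s => (2 * (J : ℝ))⁻¹ * ∑ j, ∑ k, e s j k * e s j k := by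
    funext s
    rw [hVe]
    simp [dotProduct]
  have hDer : HasDerivAt Ve ((2 * (J : ℝ))⁻¹ * ∑ j, ∑ k,
      ((-(((C t * Aᵀ * Γ⁻¹) * A) *ᵥ e t j)) k * e t j k
        + e t j k * (-(((C t * Aᵀ * Γ⁻¹) * A) *ᵥ e t j)) k)) t := by
    rw [hVe']
    exact (HasDerivAt.fun_sum fun j _ =>
      HasDerivAt.fun_sum fun k _ => (hde j k).fun_mul (hde j k)).const_mul _
  -- central algebraic identity
  have hcent : ∀ j : Fin J, e t j ⬝ᵥ (((C t * Aᵀ * Γ⁻¹) * A) *ᵥ e t j)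
      = (J : ℝ)⁻¹ * ∑ i, (e t i ⬝ᵥ e t j) * ((A *ᵥ e t i) ⬝ᵥ (Γ⁻¹ *ᵥ (A *ᵥ e t j))) := by
    intro j
    have hassoc : (C t * Aᵀ * Γ⁻¹) * A = C t * (Aᵀ * (Γ⁻¹ * A)) := by
      rw [Matrix.mul_assoc, Matrix.mul_assoc]
    rw [hassoc, ← mulVec_mulVec, hC t, my_smul_mulVec, my_sum_mulVec]
    simp_rw [my_vecMulVec_mulVec]
    rw [dotProduct_smul, my_dotProduct_sum, smul_eq_mul]
    congr 1
    refine Finset.sum_congr rfl fun i _ => ?_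
    have hBf : e t i ⬝ᵥ ((Aᵀ * (Γ⁻¹ * A)) *ᵥ e t j)
        = (A *ᵥ e t i) ⬝ᵥ (Γ⁻¹ *ᵥ (A *ᵥ e t j)) := by
      rw [← mulVec_mulVec, dotProduct_mulVec, vecMul_transpose, ← mulVec_mulVec]
    rw [dotProduct_smul, smul_eq_mul, hBf, dotProduct_comm (e t j)]
    ring
  -- rewrite the derivative value
  have hfinal : (2 * (J : ℝ))⁻¹ * ∑ j, ∑ k,
      ((-(((C t * Aᵀ * Γ⁻¹) * A) *ᵥ e t j)) k * e t j k
        + e t j k * (-(((C t * Aᵀ * Γ⁻¹) * A) *ᵥ e t j)) k)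
      = -(J : ℝ)⁻¹ ^ 2 * ∑ i, ∑ j,
          (e t i ⬝ᵥ e t j) * ((A *ᵥ e t i) ⬝ᵥ (Γ⁻¹ *ᵥ (A *ᵥ e t j))) := by
    have h3 : ∀ j : Fin J, ∑ k, ((-(((C t * Aᵀ * Γ⁻¹) * A) *ᵥ e t j)) k * e t j k
        + e t j k * (-(((C t * Aᵀ * Γ⁻¹) * A) *ᵥ e t j)) k)
        = -2 * (e t j ⬝ᵥ (((C t * Aᵀ * Γ⁻¹) * A) *ᵥ e t j)) := by
      intro j
      rw [dotProduct, Finset.mul_sum]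
      exact Finset.sum_congr rfl fun k _ => by simp; ring
    calc (2 * (J : ℝ))⁻¹ * ∑ j, ∑ k,
        ((-(((C t * Aᵀ * Γ⁻¹) * A) *ᵥ e t j)) k * e t j k
          + e t j k * (-(((C t * Aᵀ * Γ⁻¹) * A) *ᵥ e t j)) k)
        = (2 * (J : ℝ))⁻¹ * ∑ j, (-2 * ((J : ℝ)⁻¹
            * ∑ i, (e t i ⬝ᵥ e t j) * ((A *ᵥ e t i) ⬝ᵥ (Γ⁻¹ *ᵥ (A *ᵥ e t j))))) := by
          refine congrArg _ (Finset.sum_congr rfl fun j _ => ?_)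
          rw [h3 j, hcent j]
      _ = -(J : ℝ)⁻¹ ^ 2 * ∑ j, ∑ i,
            (e t i ⬝ᵥ e t j) * ((A *ᵥ e t i) ⬝ᵥ (Γ⁻¹ *ᵥ (A *ᵥ e t j))) := by
          rw [Finset.mul_sum, Finset.mul_sum]
          refine Finset.sum_congr rfl fun j _ => ?_
          field_simp
      _ = -(J : ℝ)⁻¹ ^ 2 * ∑ i, ∑ j,
            (e t i ⬝ᵥ e t j) * ((A *ᵥ e t i) ⬝ᵥ (Γ⁻¹ *ᵥ (A *ᵥ e t j))) := by
          rw [Finset.sum_comm]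
  -- nonnegativity
  obtain ⟨B, hB⟩ : ∃ B : Matrix (Fin m) (Fin m) ℝ, Γ⁻¹ = Bᴴ * B := by
    open scoped MatrixOrder Matrix.Norms.L2Operator in
    exact CStarAlgebra.nonneg_iff_eq_star_mul_self.mp hΓ.inv.posSemidef.nonneg
  have hBt : Bᴴ = Bᵀ := by
    ext i j
    simp [conjTranspose_apply]
  have hform : ∀ i j : Fin J, (A *ᵥ e t i) ⬝ᵥ (Γ⁻¹ *ᵥ (A *ᵥ e t j))
      = (B *ᵥ (A *ᵥ e t i)) ⬝ᵥ (B *ᵥ (A *ᵥ e t j)) := by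
    intro i j
    rw [hB, hBt, ← mulVec_mulVec, dotProduct_mulVec, vecMul_transpose]
  have hS : 0 ≤ ∑ i, ∑ j,
      (e t i ⬝ᵥ e t j) * ((A *ᵥ e t i) ⬝ᵥ (Γ⁻¹ *ᵥ (A *ᵥ e t j))) := by
    simp_rw [hform]
    exact gram_sum_nonneg (fun i => e t i) (fun i => B *ᵥ (A *ᵥ e t i))
  refine ⟨?_, ?_⟩
  · rw [← hfinal]
    exact hDer
  · have h := mul_nonneg (sq_nonneg ((J : ℝ)⁻¹)) hS
    nlinarith [h]
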